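/- Let Q be any finite quiver, γ₁,γ₂ ∈ ℤ_{≥0}^I. If f₁ ∈ ℋ_{γ₁} is homogeneous of polynomial degree k₁ and f₂ ∈ ℋ_{γ₂} is homogeneous of polynomial degree k₂, then the shuffle product f₁·f₂ ∈ ℋ_{γ₁+γ₂} is homogeneous of polynomial degree k₁ + k₂ − χ_Q(γ₁,γ₂). Consequently, assigning to f ∈ ℋ_γ homogeneous of degree k the bidegree (γ, 2k + χ_Q(γ,γ)) makes ℋ (when Q is symmetric, so that χ_Q is symmetric) a (ℤ_{≥0}^I × ℤ)-graded algebra. -/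

import Mathlib

open MvPolynomial

namespace COHA

variable {I : Type} [Fintype I] [DecidableEq I]

/-- Variables `x_{i,α}`, `i ∈ I`, `1 ≤ α ≤ γ i`. -/
abbrev Vars (γ : I → ℕ) : Type := Σ i : I, Fin (γ i)

/-- The polynomial ring `A_γ = ℚ[x_{i,α}]`. -/
abbrev Amod (γ : I → ℕ) : Type := MvPolynomial (Vars γ) ℚ

/-- A tuple of permutations `σ ∈ P_γ = ∏_i S_{γ^i}` acting on the variables. -/
def permEquiv {γ : I → ℕ} (σ : ∀ i, Equiv.Perm (Fin (γ i))) : Vars γ ≃ Vars γ :=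
  Equiv.sigmaCongrRight σ

/-- Invariance under `P_γ`; `ℋ_γ = {f | IsSym f}`. -/
def IsSym {γ : I → ℕ} (f : Amod γ) : Prop :=
  ∀ σ : ∀ i, Equiv.Perm (Fin (γ i)), rename (permEquiv σ) f = f

/-- The Euler form of the quiver with `a i j` arrows from `i` to `j`. -/
def chi (a : I → I → ℕ) (γ₁ γ₂ : I → ℕ) : ℤ :=
  ∑ i : I, (γ₁ i : ℤ) * (γ₂ i : ℤ) - ∑ i : I, ∑ j : I, (a i j : ℤ) * (γ₁ i : ℤ) * (γ₂ j : ℤ)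

/-- `σ_γ`, the sum of all variables. -/
noncomputable def sigmaP (γ : I → ℕ) : Amod γ := ∑ v : Vars γ, X v

/-- Identification of variable sets coming from an equality of dimension vectors. -/
def castV {γ γ' : I → ℕ} (h : γ = γ') : Vars γ ≃ Vars γ' :=
  Equiv.sigmaCongrRight fun i => finCongr (congrFun h i)

/-- Identification of polynomial rings coming from an equality of dimension vectors. -/
noncomputable def castA {γ γ' : I → ℕ} (h : γ = γ') : Amod γ → Amod γ' :=
  rename (castV h)

/-- `ℋ_γ` as a `ℚ`-submodule of `A_γ`. -/
noncomputable def Hsub (γ : I → ℕ) : Submodule ℚ (Amod γ) where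
  carrier := {f | IsSym f}
  add_mem' := fun {f g} hf hg σ => by rw [map_add, hf σ, hg σ]
  zero_mem' := fun σ => map_zero _
  smul_mem' := fun c f hf σ => by rw [map_smul, hf σ]

/-- `ℋ_γ` as a `ℚ`-subalgebra of `A_γ`. -/
noncomputable def Halg (γ : I → ℕ) : Subalgebra ℚ (Amod γ) where
  carrier := {f | IsSym f}
  mul_mem' := fun {f g} hf hg σ => by rw [map_mul, hf σ, hg σ]
  one_mem' := fun σ => map_one _
  add_mem' := fun {f g} hf hg σ => by rw [map_add, hf σ, hg σ]
  zero_mem' := fun σ => map_zero _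
  algebraMap_mem' := fun r σ => by
    simp [MvPolynomial.algebraMap_eq]
/-- Inclusion of the first block of variables. -/
def inlV {γ₁ γ₂ : I → ℕ} : Vars γ₁ → Vars (γ₁ + γ₂) :=
  fun v => ⟨v.1, Fin.castAdd (γ₂ v.1) v.2⟩

/-- Inclusion of the second block of variables. -/
def inrV {γ₁ γ₂ : I → ℕ} : Vars γ₂ → Vars (γ₁ + γ₂) :=
  fun v => ⟨v.1, Fin.natAdd (γ₁ v.1) v.2⟩

/-- The numerator `∏_{i,j} ∏_{α₁,α₂} (x''_{j,α₂} - x'_{i,α₁})^(a i j)` of the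
Kontsevich–Soibelman kernel. -/
noncomputable def shuffleNum (a : I → I → ℕ) (γ₁ γ₂ : I → ℕ) : Amod (γ₁ + γ₂) :=
  ∏ i : I, ∏ j : I, ∏ α₁ : Fin (γ₁ i), ∏ α₂ : Fin (γ₂ j),
    (X (inrV (γ₁ := γ₁) ⟨j, α₂⟩) - X (inlV (γ₂ := γ₂) ⟨i, α₁⟩)) ^ (a i j)

/-- The denominator `∏_i ∏_{α₁,α₂} (x''_{i,α₂} - x'_{i,α₁})` of the
Kontsevich–Soibelman kernel. -/
noncomputable def shuffleDen (γ₁ γ₂ : I → ℕ) : Amod (γ₁ + γ₂) :=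
  ∏ i : I, ∏ α₁ : Fin (γ₁ i), ∏ α₂ : Fin (γ₂ i),
    (X (inrV (γ₁ := γ₁) ⟨i, α₂⟩) - X (inlV (γ₂ := γ₂) ⟨i, α₁⟩))

/-- `σ` is an `(n₁, n₂)`-shuffle: it is increasing on the two blocks. -/
def IsShuffle (n₁ n₂ : ℕ) (σ : Equiv.Perm (Fin (n₁ + n₂))) : Prop :=
  (∀ p q : Fin n₁, p < q → σ (Fin.castAdd n₂ p) < σ (Fin.castAdd n₂ q)) ∧
  (∀ p q : Fin n₂, p < q → σ (Fin.natAdd n₁ p) < σ (Fin.natAdd n₁ q))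

open Classical in
/-- The sum, over all tuples of shuffles, of the permuted rational functions
`f₁(x') f₂(x'') ∏ (x''-x')^(a i j) / ∏ (x''-x')`, as an element of the fraction
field of `A_{γ₁+γ₂}`. -/
noncomputable def shuffleSum (a : I → I → ℕ) (γ₁ γ₂ : I → ℕ)
    (f₁ : Amod γ₁) (f₂ : Amod γ₂) : FractionRing (Amod (γ₁ + γ₂)) :=
  ∑ σ : ∀ i : I, Equiv.Perm (Fin (γ₁ i + γ₂ i)),
    if ∀ i : I, IsShuffle (γ₁ i) (γ₂ i) (σ i) then
      algebraMap (Amod (γ₁ + γ₂)) _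
          (rename (permEquiv (γ := γ₁ + γ₂) σ)
            (rename (inlV (γ₂ := γ₂)) f₁ * rename (inrV (γ₁ := γ₁)) f₂ *
              shuffleNum a γ₁ γ₂)) /
        algebraMap (Amod (γ₁ + γ₂)) _
          (rename (permEquiv (γ := γ₁ + γ₂) σ) (shuffleDen γ₁ γ₂))
    else 0

open Classical in
/-- The Kontsevich–Soibelman shuffle product `f₁ · f₂ ∈ ℋ_{γ₁+γ₂}`: the unique
polynomial mapping to `shuffleSum` in the fraction field. -/
noncomputable def shuffleMul (a : I → I → ℕ) {γ₁ γ₂ : I → ℕ}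
    (f₁ : Amod γ₁) (f₂ : Amod γ₂) : Amod (γ₁ + γ₂) :=
  if h : ∃ p : Amod (γ₁ + γ₂),
      algebraMap (Amod (γ₁ + γ₂)) (FractionRing (Amod (γ₁ + γ₂))) p =
        shuffleSum a γ₁ γ₂ f₁ f₂
  then h.choose else 0
/-- `f` is homogeneous of (possibly negative) integer degree `c`. -/
def IsHomogInt {γ : I → ℕ} (f : Amod γ) (c : ℤ) : Prop :=
  ∀ d ∈ f.support, ((d.sum fun _ e => e : ℕ) : ℤ) = c

/-- If `f₁ ∈ ℋ_{γ₁}` is homogeneous of degree `k₁` and `f₂ ∈ ℋ_{γ₂}` is homogeneous of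
degree `k₂`, then the shuffle product `f₁ · f₂` is homogeneous of degree
`k₁ + k₂ - χ_Q(γ₁,γ₂)`.  Consequently (for symmetric `Q`), assigning to homogeneous
`f ∈ ℋ_γ` of degree `k` the bidegree `(γ, 2k + χ_Q(γ,γ))` makes `ℋ` a
`(ℤ_{≥0}^I × ℤ)`-graded algebra: the second claim is the arithmetic compatibility
`2(k₁ + k₂ - χ_Q(γ₁,γ₂)) + χ_Q(γ₁+γ₂,γ₁+γ₂) = (2k₁ + χ_Q(γ₁,γ₁)) + (2k₂ + χ_Q(γ₂,γ₂))`. -/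

lemma homog_cancel {σ R : Type*} [CommRing R] [IsDomain R]
    {p q : MvPolynomial σ R} {b n : ℕ} (hq : q.IsHomogeneous b) (hq0 : q ≠ 0)
    (h : (p * q).IsHomogeneous n) {d : σ →₀ ℕ} (hd : d ∈ p.support) :
    d.degree + b = n := by
  set e := d.degree with he
  have hpe : homogeneousComponent e p ≠ 0 := by
    intro h0
    have hc := coeff_homogeneousComponent (n := e) (φ := p) d
    rw [h0] at hc
    simp [← he] at hc
    exact (MvPolynomial.mem_support_iff.mp hd) hc.symm
  have hmul_ne : homogeneousComponent e p * q ≠ 0 := mul_ne_zero hpe hq0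
  obtain ⟨d₀, hd₀⟩ := MvPolynomial.support_nonempty.mpr hmul_ne
  have hd₀deg : d₀.degree = e + b := by
    by_contra hne
    exact (MvPolynomial.mem_support_iff.mp hd₀)
      (((homogeneousComponent_isHomogeneous e p).mul hq).coeff_eq_zero hne)
  have hle : e ≤ p.totalDegree := by
    by_contra hlt; push_neg at hlt
    exact hpe (homogeneousComponent_eq_zero e p hlt)
  have hco : MvPolynomial.coeff d₀ (p * q) = MvPolynomial.coeff d₀ (homogeneousComponent e p * q) := by
    conv_lhs => rw [← sum_homogeneousComponent p]
    rw [Finset.sum_mul, MvPolynomial.coeff_sum]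
    refine Finset.sum_eq_single_of_mem e (Finset.mem_range.mpr (by omega)) ?_
    intro i _ hi
    exact ((homogeneousComponent_isHomogeneous i p).mul hq).coeff_eq_zero
      (by rw [hd₀deg]; omega)
  have hmem : d₀ ∈ (p * q).support := by
    rw [MvPolynomial.mem_support_iff, hco]
    exact MvPolynomial.mem_support_iff.mp hd₀
  have hn : d₀.degree = n := by
    by_contra hne
    exact (MvPolynomial.mem_support_iff.mp hmem) (h.coeff_eq_zero hne)
  omega

lemma inlV_ne_inrV {γ₁ γ₂ : I → ℕ} (i : I) (α₁ : Fin (γ₁ i)) (j : I) (α₂ : Fin (γ₂ j)) :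
    (inrV (γ₁ := γ₁) ⟨j, α₂⟩ : Vars (γ₁ + γ₂)) ≠ inlV (γ₂ := γ₂) ⟨i, α₁⟩ := by
  intro h
  rw [Sigma.ext_iff] at h
  obtain ⟨h1, h2⟩ := h
  subst h1
  replace h2 := eq_of_heq h2
  have h3 : γ₁ j + (α₂ : ℕ) = (α₁ : ℕ) := congrArg Fin.val h2
  have hα : (α₁ : ℕ) < γ₁ j := α₁.isLt
  omega

lemma shuffleDen_ne_zero (γ₁ γ₂ : I → ℕ) : shuffleDen (I := I) γ₁ γ₂ ≠ 0 := by
  unfold shuffleDen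
  apply Finset.prod_ne_zero_iff.mpr; intro i _
  apply Finset.prod_ne_zero_iff.mpr; intro α₁ _
  apply Finset.prod_ne_zero_iff.mpr; intro α₂ _
  exact sub_ne_zero.mpr fun h => inlV_ne_inrV i α₁ i α₂ (MvPolynomial.X_injective h)

lemma shuffleDen_isHomog (γ₁ γ₂ : I → ℕ) :
    (shuffleDen (I := I) γ₁ γ₂).IsHomogeneous
      (∑ i : I, ∑ _α₁ : Fin (γ₁ i), ∑ _α₂ : Fin (γ₂ i), 1) := by
  unfold shuffleDen
  apply MvPolynomial.IsHomogeneous.prod; intro i _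
  apply MvPolynomial.IsHomogeneous.prod; intro α₁ _
  apply MvPolynomial.IsHomogeneous.prod; intro α₂ _
  exact (MvPolynomial.isHomogeneous_X _ _).sub (MvPolynomial.isHomogeneous_X _ _)

lemma shuffleNum_isHomog (a : I → I → ℕ) (γ₁ γ₂ : I → ℕ) :
    (shuffleNum (I := I) a γ₁ γ₂).IsHomogeneous
      (∑ i : I, ∑ j : I, ∑ _α₁ : Fin (γ₁ i), ∑ _α₂ : Fin (γ₂ j), a i j) := by
  unfold shuffleNum
  apply MvPolynomial.IsHomogeneous.prod; intro i _
  apply MvPolynomial.IsHomogeneous.prod; intro j _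
  apply MvPolynomial.IsHomogeneous.prod; intro α₁ _
  apply MvPolynomial.IsHomogeneous.prod; intro α₂ _
  simpa using
    ((MvPolynomial.isHomogeneous_X _ _).sub (MvPolynomial.isHomogeneous_X _ _)).pow (a i j)

set_option maxHeartbeats 2000000 in
theorem shuffleMul_isHomogeneous
    (I : Type) [Fintype I] [DecidableEq I] (a : I → I → ℕ)
    (γ₁ γ₂ : I → ℕ) (f₁ : Amod γ₁) (f₂ : Amod γ₂)
    (h₁ : IsSym f₁) (h₂ : IsSym f₂) (k₁ k₂ : ℕ)
    (hh₁ : MvPolynomial.IsHomogeneous f₁ k₁) (hh₂ : MvPolynomial.IsHomogeneous f₂ k₂) :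
    IsHomogInt (shuffleMul a f₁ f₂) ((k₁ : ℤ) + (k₂ : ℤ) - chi a γ₁ γ₂) ∧
    ((∀ i j : I, a i j = a j i) →
      2 * ((k₁ : ℤ) + (k₂ : ℤ) - chi a γ₁ γ₂) + chi a (γ₁ + γ₂) (γ₁ + γ₂) =
        (2 * (k₁ : ℤ) + chi a γ₁ γ₁) + (2 * (k₂ : ℤ) + chi a γ₂ γ₂)) := by
  classical
  constructor
  · -- homogeneity of the shuffle product
    rw [shuffleMul]
    split_ifs with hex
    · intro d hd
      have hinj : Function.Injective
          (algebraMap (Amod (γ₁ + γ₂)) (FractionRing (Amod (γ₁ + γ₂)))) :=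
        IsFractionRing.injective _ _
      set A : ℕ := ∑ i : I, ∑ j : I, ∑ _α₁ : Fin (γ₁ i), ∑ _α₂ : Fin (γ₂ j), a i j with hA
      set B : ℕ := ∑ i : I, ∑ _α₁ : Fin (γ₁ i), ∑ _α₂ : Fin (γ₂ i), 1 with hB
      set s : ℕ := Fintype.card (∀ i : I, Equiv.Perm (Fin (γ₁ i + γ₂ i))) with hscard
      have hs : 1 ≤ s := Fintype.card_pos
      set N₀ : Amod (γ₁ + γ₂) :=
        rename (inlV (γ₂ := γ₂)) f₁ * rename (inrV (γ₁ := γ₁)) f₂ * shuffleNum a γ₁ γ₂ with hN₀def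
      have hN₀ : N₀.IsHomogeneous (k₁ + k₂ + A) :=
        ((hh₁.rename_isHomogeneous).mul (hh₂.rename_isHomogeneous)).mul
          (shuffleNum_isHomog a γ₁ γ₂)
      set D : (∀ i : I, Equiv.Perm (Fin (γ₁ i + γ₂ i))) → Amod (γ₁ + γ₂) :=
        fun σ => rename (permEquiv (γ := γ₁ + γ₂) σ) (shuffleDen γ₁ γ₂) with hDdef
      have hD : ∀ σ, (D σ).IsHomogeneous B := fun σ =>
        (shuffleDen_isHomog γ₁ γ₂).rename_isHomogeneous
      have hD0 : ∀ σ, D σ ≠ 0 := fun σ h0 =>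
        shuffleDen_ne_zero γ₁ γ₂
          (rename_injective _ (Equiv.injective _) (by simpa using h0))
      set Num : (∀ i : I, Equiv.Perm (Fin (γ₁ i + γ₂ i))) → Amod (γ₁ + γ₂) :=
        fun σ => if (∀ i : I, IsShuffle (γ₁ i) (γ₂ i) (σ i)) then
            rename (permEquiv (γ := γ₁ + γ₂) σ) N₀ * ∏ σ' ∈ Finset.univ.erase σ, D σ'
          else 0 with hNumdef
      have hNum : ∀ σ, (Num σ).IsHomogeneous (k₁ + k₂ + A + (s - 1) * B) := by
        intro σ
        rw [hNumdef]
        dsimp only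
        split_ifs with hsh
        · have h1 : (∏ σ' ∈ Finset.univ.erase σ, D σ').IsHomogeneous ((s - 1) * B) := by
            have h2 := MvPolynomial.IsHomogeneous.prod (Finset.univ.erase σ) D (fun _ => B)
              (fun σ' _ => hD σ')
            simpa [Finset.sum_const, Finset.card_erase_of_mem, smul_eq_mul, hscard] using h2
          exact (hN₀.rename_isHomogeneous).mul h1
        · exact isHomogeneous_zero _ _ _
      have hProdD : (∏ σ' : (∀ i : I, Equiv.Perm (Fin (γ₁ i + γ₂ i))), D σ').IsHomogeneous
          (s * B) := by
        have h2 := MvPolynomial.IsHomogeneous.prod Finset.univ D (fun _ => B) (fun σ' _ => hD σ')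
        simpa [Finset.sum_const, smul_eq_mul, hscard] using h2
      have hProdD0 : (∏ σ' : (∀ i : I, Equiv.Perm (Fin (γ₁ i + γ₂ i))), D σ') ≠ 0 :=
        Finset.prod_ne_zero_iff.mpr fun σ' _ => hD0 σ'
      have hkey : hex.choose * ∏ σ' : (∀ i : I, Equiv.Perm (Fin (γ₁ i + γ₂ i))), D σ' =
          ∑ σ : (∀ i : I, Equiv.Perm (Fin (γ₁ i + γ₂ i))), Num σ := by
        apply hinj
        rw [map_mul, hex.choose_spec, map_sum, shuffleSum, Finset.sum_mul]
        refine Finset.sum_congr rfl fun σ _ => ?_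
        rw [hNumdef]
        dsimp only
        split_ifs with hsh
        · rw [← Finset.mul_prod_erase _ D (Finset.mem_univ σ), map_mul, map_mul, map_mul]
          have hφD : algebraMap (Amod (γ₁ + γ₂)) (FractionRing (Amod (γ₁ + γ₂))) (D σ) ≠ 0 :=
            fun h0 => hD0 σ (hinj (by simpa using h0))
          have hφD' : algebraMap (Amod (γ₁ + γ₂)) (FractionRing (Amod (γ₁ + γ₂)))
              (rename (permEquiv (γ := γ₁ + γ₂) σ) (shuffleDen γ₁ γ₂)) ≠ 0 := hφD
          simp only [map_mul, hDdef]
          field_simp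
        · simp
      have hNsum : (∑ σ : (∀ i : I, Equiv.Perm (Fin (γ₁ i + γ₂ i))), Num σ).IsHomogeneous
          (k₁ + k₂ + A + (s - 1) * B) :=
        MvPolynomial.IsHomogeneous.sum _ _ _ fun σ _ => hNum σ
      have hdd : d.degree + s * B = k₁ + k₂ + A + (s - 1) * B :=
        homog_cancel hProdD hProdD0 (by rw [hkey]; exact hNsum) hd
      have hdeg : d.degree + B = k₁ + k₂ + A := by
        clear_value s
        obtain ⟨t, rfl⟩ : ∃ t, s = t + 1 := ⟨s - 1, by omega⟩
        have hmul : (t + 1) * B = t * B + B := by ring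
        rw [hmul] at hdd
        simp only [Nat.add_sub_cancel] at hdd
        generalize t * B = c at hdd
        omega
      have hcastA : (A : ℤ) = ∑ i : I, ∑ j : I, (a i j : ℤ) * (γ₁ i : ℤ) * (γ₂ j : ℤ) := by
        rw [hA]
        push_cast
        refine Finset.sum_congr rfl fun i _ => Finset.sum_congr rfl fun j _ => ?_
        simp [Finset.sum_const, Finset.card_univ, mul_assoc]
        ring
      have hcastB : (B : ℤ) = ∑ i : I, (γ₁ i : ℤ) * (γ₂ i : ℤ) := by
        rw [hB]
        push_cast
        refine Finset.sum_congr rfl fun i _ => ?_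
        simp [Finset.sum_const, Finset.card_univ]
      have hchi : chi a γ₁ γ₂ = (B : ℤ) - (A : ℤ) := by
        rw [chi, hcastB, hcastA]
      have hdsum : (d.sum fun _ e => e) = d.degree := rfl
      rw [hdsum, hchi]
      clear_value A B
      omega
    · intro d hd
      simp at hd
  · -- arithmetic compatibility of the bigrading
    intro hsym
    have harith : chi a (γ₁ + γ₂) (γ₁ + γ₂) =
        chi a γ₁ γ₁ + chi a γ₂ γ₂ + 2 * chi a γ₁ γ₂ := by
      simp only [chi, Pi.add_apply]
      push_cast
      have e1 : ∑ i : I, ((γ₁ i : ℤ) + (γ₂ i : ℤ)) * ((γ₁ i : ℤ) + (γ₂ i : ℤ)) =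
          ∑ i : I, ((γ₁ i : ℤ) * (γ₁ i : ℤ)) + ∑ i : I, ((γ₂ i : ℤ) * (γ₂ i : ℤ)) +
            2 * ∑ i : I, ((γ₁ i : ℤ) * (γ₂ i : ℤ)) := by
        rw [Finset.mul_sum, ← Finset.sum_add_distrib, ← Finset.sum_add_distrib]
        exact Finset.sum_congr rfl fun i _ => by ring
      have e2 : ∑ i : I, ∑ j : I,
            (a i j : ℤ) * ((γ₁ i : ℤ) + (γ₂ i : ℤ)) * ((γ₁ j : ℤ) + (γ₂ j : ℤ)) =
          ∑ i : I, ∑ j : I, (a i j : ℤ) * (γ₁ i : ℤ) * (γ₁ j : ℤ) +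
          ∑ i : I, ∑ j : I, (a i j : ℤ) * (γ₂ i : ℤ) * (γ₂ j : ℤ) +
          ∑ i : I, ∑ j : I, (a i j : ℤ) * (γ₁ i : ℤ) * (γ₂ j : ℤ) +
          ∑ i : I, ∑ j : I, (a i j : ℤ) * (γ₂ i : ℤ) * (γ₁ j : ℤ) := by
        rw [← Finset.sum_add_distrib, ← Finset.sum_add_distrib, ← Finset.sum_add_distrib]
        refine Finset.sum_congr rfl fun i _ => ?_
        rw [← Finset.sum_add_distrib, ← Finset.sum_add_distrib, ← Finset.sum_add_distrib]
        exact Finset.sum_congr rfl fun j _ => by ring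
      have e3 : ∑ i : I, ∑ j : I, (a i j : ℤ) * (γ₂ i : ℤ) * (γ₁ j : ℤ) =
          ∑ i : I, ∑ j : I, (a i j : ℤ) * (γ₁ i : ℤ) * (γ₂ j : ℤ) := by
        rw [Finset.sum_comm]
        refine Finset.sum_congr rfl fun i _ => Finset.sum_congr rfl fun j _ => ?_
        rw [hsym j i]; ring
      rw [e1, e2, e3]; ring
    rw [harith]; ring
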